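/- Let 0 < s < t, σ > 0, S₀ > 0, x > 0 and w ∈ ℝ. Let G be a standard Gaussian random variable and define S = S₀·exp(-σ²s/2 + σ·(sw/t) + σ√(s(t-s)/t)·G) and V = (t-s)·σs + √(t·s·(t-s))·G. Set β = (ln(x/S₀) + σ²s/2)/σ, m = σ√(s(t-s)/t), and d₂(w) = √(t/(s(t-s)))·(β - sw/t). Then E[1_{S ≥ x}·V/S] = (1/S₀)·√(t·s·(t-s)/(2π))·exp(σ²s - σ²s²/(2t) - σsw/t - (d₂(w) + m)²/2). -/

import Mathlib

open MeasureTheory ProbabilityTheory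

lemma aux_shift (d m : ℝ) :
    ∫ x in Set.Ioi d, (x + m) * Real.exp (-(x + m) ^ 2 / 2) = Real.exp (-(d + m) ^ 2 / 2) := by
  have hint : Integrable (fun x : ℝ => (x + m) * Real.exp (-(x + m) ^ 2 / 2)) := by
    have h := (integrable_mul_exp_neg_mul_sq (by norm_num : (0:ℝ) < 1/2)).comp_add_right m
    convert h using 2 with x
    ring_nf
  have hderiv : ∀ x ∈ Set.Ici d,
      HasDerivAt (fun u : ℝ => -Real.exp (-(u + m) ^ 2 / 2))
        ((x + m) * Real.exp (-(x + m) ^ 2 / 2)) x := by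
    intro x _
    have h1 : HasDerivAt (fun u : ℝ => -(u + m) ^ 2 / 2) (-(x + m)) x := by
      have := (((hasDerivAt_id x).add_const m).pow 2).neg.div_const 2
      exact this.congr_deriv (by simp; ring)
    have h2 := h1.exp.neg
    exact h2.congr_deriv (by ring)
  have htend : Filter.Tendsto (fun u : ℝ => -Real.exp (-(u + m) ^ 2 / 2)) Filter.atTop (nhds 0) := by
    have h1 : Filter.Tendsto (fun u : ℝ => u + m) Filter.atTop Filter.atTop :=
      Filter.tendsto_atTop_add_const_right _ m Filter.tendsto_id
    have h2 : Filter.Tendsto (fun u : ℝ => -(u + m) ^ 2 / 2) Filter.atTop Filter.atBot := by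
      have h3 := (((Filter.tendsto_pow_atTop (two_ne_zero)).comp h1).atTop_div_const
        (by norm_num : (0:ℝ) < 2))
      have := Filter.tendsto_neg_atTop_atBot.comp h3
      convert this using 2 with u
      simp [Function.comp]; ring
    have := (Real.tendsto_exp_atBot.comp h2).neg
    simpa using this
  have := integral_Ioi_of_hasDerivAt_of_tendsto' hderiv hint.integrableOn htend
  rw [this]; ring

lemma aux2 (d m k c A : ℝ) (hc : 0 < c) :
    ∫ g, (if d ≤ g then (1:ℝ) else 0) * (k * (g + m)) / (c * Real.exp (A + m * g))
        ∂(gaussianReal 0 1)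
      = k / (c * Real.sqrt (2 * Real.pi)) * Real.exp (-A + m ^ 2 / 2 - (d + m) ^ 2 / 2) := by
  rw [gaussianReal_of_var_ne_zero 0 one_ne_zero]
  have hpdf : gaussianPDF 0 1 = fun x => ((gaussianPDFReal 0 1 x).toNNReal : ENNReal) := rfl
  rw [hpdf, integral_withDensity_eq_integral_smul
    ((measurable_gaussianPDFReal 0 1).real_toNNReal)]
  have hsπ : (0:ℝ) < Real.sqrt (2 * Real.pi) := Real.sqrt_pos.2 (by positivity)
  have hptw : ∀ x : ℝ,
      (gaussianPDFReal 0 1 x).toNNReal •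
        ((if d ≤ x then (1:ℝ) else 0) * (k * (x + m)) / (c * Real.exp (A + m * x)))
      = (k / (c * Real.sqrt (2 * Real.pi)) * Real.exp (-A + m ^ 2 / 2)) *
          Set.indicator (Set.Ici d) (fun g => (g + m) * Real.exp (-(g + m) ^ 2 / 2)) x := by
    intro x
    rw [NNReal.smul_def, Real.coe_toNNReal _ (gaussianPDFReal_nonneg 0 1 x)]
    have hg : gaussianPDFReal 0 1 x = (Real.sqrt (2 * Real.pi))⁻¹ * Real.exp (-x ^ 2 / 2) := by
      simp [gaussianPDFReal]
    rw [hg]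
    by_cases hxd : d ≤ x
    · rw [if_pos hxd, Set.indicator_of_mem (Set.mem_Ici.2 hxd)]
      have hexp : Real.exp (-A + m ^ 2 / 2) * Real.exp (-(x + m) ^ 2 / 2) * Real.exp (A + m * x)
          = Real.exp (-x ^ 2 / 2) := by
        rw [← Real.exp_add, ← Real.exp_add]; congr 1; ring
      rw [← hexp]
      have hE : Real.exp (A + m * x) ≠ 0 := (Real.exp_pos _).ne'
      rw [smul_eq_mul]
      field_simp
    · rw [if_neg hxd, Set.indicator_of_notMem (by simpa using hxd)]
      simp
  calc ∫ x, (gaussianPDFReal 0 1 x).toNNReal •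
        ((if d ≤ x then (1:ℝ) else 0) * (k * (x + m)) / (c * Real.exp (A + m * x)))
      = ∫ x, (k / (c * Real.sqrt (2 * Real.pi)) * Real.exp (-A + m ^ 2 / 2)) *
          Set.indicator (Set.Ici d) (fun g => (g + m) * Real.exp (-(g + m) ^ 2 / 2)) x := by
        exact integral_congr_ae (Filter.Eventually.of_forall hptw)
    _ = (k / (c * Real.sqrt (2 * Real.pi)) * Real.exp (-A + m ^ 2 / 2)) *
          ∫ x, Set.indicator (Set.Ici d) (fun g => (g + m) * Real.exp (-(g + m) ^ 2 / 2)) x := by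
        rw [integral_const_mul]
    _ = (k / (c * Real.sqrt (2 * Real.pi)) * Real.exp (-A + m ^ 2 / 2)) *
          Real.exp (-(d + m) ^ 2 / 2) := by
        rw [integral_indicator measurableSet_Ici, integral_Ici_eq_integral_Ioi, aux_shift]
    _ = k / (c * Real.sqrt (2 * Real.pi)) * Real.exp (-A + m ^ 2 / 2 - (d + m) ^ 2 / 2) := by
        rw [mul_assoc, ← Real.exp_add]; ring_nf

theorem stmt13 {Ω : Type*} [MeasurableSpace Ω] (P : Measure Ω) [IsProbabilityMeasure P]
    (s t σ S₀ x w : ℝ) (hs : 0 < s) (hst : s < t) (hσ : 0 < σ) (hS₀ : 0 < S₀) (hx : 0 < x)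
    (G : Ω → ℝ) (hmG : Measurable G) (hG : P.map G = gaussianReal 0 1)
    (S V : Ω → ℝ)
    (hS : ∀ ω, S ω = S₀ * Real.exp (-σ ^ 2 * s / 2 + σ * (s * w / t)
      + σ * Real.sqrt (s * (t - s) / t) * G ω))
    (hV : ∀ ω, V ω = (t - s) * σ * s + Real.sqrt (t * s * (t - s)) * G ω)
    (β m : ℝ) (d₂ : ℝ → ℝ)
    (hβ : β = (Real.log (x / S₀) + σ ^ 2 * s / 2) / σ)
    (hm : m = σ * Real.sqrt (s * (t - s) / t))
    (hd₂ : ∀ v, d₂ v = Real.sqrt (t / (s * (t - s))) * (β - s * v / t)) :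
    ∫ ω, (if x ≤ S ω then (1 : ℝ) else 0) * V ω / S ω ∂P
      = (1 / S₀) * Real.sqrt (t * s * (t - s) / (2 * Real.pi))
          * Real.exp (σ ^ 2 * s - σ ^ 2 * s ^ 2 / (2 * t) - σ * s * w / t
            - (d₂ w + m) ^ 2 / 2) := by
  have ht : 0 < t := hs.trans hst
  have hts : 0 < t - s := sub_pos.2 hst
  set A : ℝ := -σ ^ 2 * s / 2 + σ * (s * w / t) with hA
  set k : ℝ := Real.sqrt (t * s * (t - s)) with hk
  set d : ℝ := d₂ w with hdd
  have hm0 : 0 < m := by rw [hm]; positivity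
  have hkm : k * m = σ * (s * (t - s)) := by
    rw [hk, hm, mul_left_comm, ← Real.sqrt_mul (by positivity),
      show t * s * (t - s) * (s * (t - s) / t) = (s * (t - s)) ^ 2 by field_simp,
      Real.sqrt_sq (by positivity)]
  have hm2 : m ^ 2 = σ ^ 2 * (s * (t - s) / t) := by
    rw [hm, mul_pow, Real.sq_sqrt (by positivity)]
  have hmd : m * d = Real.log (x / S₀) - A := by
    have hsq : Real.sqrt (s * (t - s) / t) * Real.sqrt (t / (s * (t - s))) = 1 := by
      rw [← Real.sqrt_mul (by positivity),
        show s * (t - s) / t * (t / (s * (t - s))) = 1 by field_simp, Real.sqrt_one]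
    have hb : σ * β = Real.log (x / S₀) + σ ^ 2 * s / 2 := by
      rw [hβ]; field_simp
    calc m * d = (Real.sqrt (s * (t - s) / t) * Real.sqrt (t / (s * (t - s))))
          * (σ * β) - (Real.sqrt (s * (t - s) / t) * Real.sqrt (t / (s * (t - s))))
          * (σ * (s * w / t)) := by rw [hm, hdd, hd₂]; ring
      _ = Real.log (x / S₀) - A := by rw [hsq, hb, hA]; ring
  have hcond : ∀ g : ℝ, (x ≤ S₀ * Real.exp (A + m * g)) ↔ d ≤ g := by
    intro g
    rw [← div_le_iff₀' hS₀ , ← Real.log_le_iff_le_exp (by positivity), ← sub_le_iff_le_add',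
      ← hmd, mul_le_mul_iff_right₀ hm0]
  have hptw : ∀ ω, (if x ≤ S ω then (1 : ℝ) else 0) * V ω / S ω
      = (fun g => (if d ≤ g then (1:ℝ) else 0) * (k * (g + m)) / (S₀ * Real.exp (A + m * g)))
          (G ω) := by
    intro ω
    simp only
    rw [hS ω, hV ω, ← hm]
    simp only [hcond]
    congr 2
    rw [mul_add, hkm]; ring
  have hFm : Measurable fun g : ℝ =>
      (if d ≤ g then (1:ℝ) else 0) * (k * (g + m)) / (S₀ * Real.exp (A + m * g)) := by
    apply Measurable.div
    · exact (Measurable.ite measurableSet_Ici measurable_const measurable_const).mul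
        (by fun_prop)
    · fun_prop
  calc ∫ ω, (if x ≤ S ω then (1 : ℝ) else 0) * V ω / S ω ∂P
      = ∫ ω, (fun g => (if d ≤ g then (1:ℝ) else 0) * (k * (g + m))
          / (S₀ * Real.exp (A + m * g))) (G ω) ∂P := by
        exact integral_congr_ae (Filter.Eventually.of_forall hptw)
    _ = ∫ g, (if d ≤ g then (1:ℝ) else 0) * (k * (g + m))
          / (S₀ * Real.exp (A + m * g)) ∂(gaussianReal 0 1) := by
        rw [← hG, integral_map hmG.aemeasurable hFm.aestronglyMeasurable]
    _ = k / (S₀ * Real.sqrt (2 * Real.pi)) * Real.exp (-A + m ^ 2 / 2 - (d + m) ^ 2 / 2) :=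
        aux2 d m k S₀ A hS₀
    _ = (1 / S₀) * Real.sqrt (t * s * (t - s) / (2 * Real.pi))
          * Real.exp (σ ^ 2 * s - σ ^ 2 * s ^ 2 / (2 * t) - σ * s * w / t
            - (d + m) ^ 2 / 2) := by
        rw [show -A + m ^ 2 / 2 - (d + m) ^ 2 / 2
            = σ ^ 2 * s - σ ^ 2 * s ^ 2 / (2 * t) - σ * s * w / t - (d + m) ^ 2 / 2 by
          rw [hA, hm2]; field_simp; ring]
        rw [hk, Real.sqrt_div (by positivity : (0:ℝ) ≤ t * s * (t - s))]
        ring
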